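/- Let X be a standard Borel space, let p, q, r be probability measures on X, let s be a coupling of p and q, and let t be a coupling of q and r. Then the conditional kernel of the composite coupling t∘s is given, for p-almost every x, by the Chapman–Kolmogorov composition: (t∘s)⃗(·|x) equals the bind of s⃗(·|x) along the kernel t⃗, i.e. for p-almost all x and all measurable C ⊆ X, (t∘s)⃗(C|x) = ∫_X t⃗(C|y) s⃗(dy|x). -/

import Mathlib

open MeasureTheory ProbabilityTheory

variable {X : Type*} [MeasurableSpace X] [StandardBorelSpace X] [Nonempty X]

/-- The composite `t ∘ s` of couplings: push `q ⊗ (s⃖ ×ₖ t⃗)` onto the outer two coordinates,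
where `q = s.snd` is the middle measure. -/
noncomputable def coupComp (t s : Measure (X × X)) [IsFiniteMeasure s] [IsFiniteMeasure t] :
    Measure (X × X) :=
  (s.snd.compProd ((s.map Prod.swap).condKernel ×ₖ t.condKernel)).map Prod.snd

instance coupComp.instIsFiniteMeasure (t s : Measure (X × X))
    [IsFiniteMeasure s] [IsFiniteMeasure t] : IsFiniteMeasure (coupComp t s) := by
  unfold coupComp; infer_instance

lemma measurable_condKernel_snd_aux (κ : ProbabilityTheory.Kernel X X) [IsSFiniteKernel κ]
    {E : Set (X × X)} (hE : MeasurableSet E) :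
    Measurable fun z : X × X => κ z.2 (Prod.mk z.1 ⁻¹' E) := by
  have := Kernel.measurable_kernel_prodMk_left
    (κ := κ.comap Prod.snd measurable_snd)
    (t := {p : (X × X) × X | (p.1.1, p.2) ∈ E})
    ((measurable_fst.fst.prodMk measurable_snd) hE)
  simpa [Kernel.comap_apply, Set.preimage] using this

lemma coupComp_eq_compProd (s t : Measure (X × X))
    [IsProbabilityMeasure s] [IsProbabilityMeasure t] :
    coupComp t s = s.fst.compProd (t.condKernel ∘ₖ s.condKernel) := by
  ext E hE
  rw [coupComp, Measure.map_apply measurable_snd hE,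
    Measure.compProd_apply (measurable_snd hE), Measure.compProd_apply hE]
  have h1 : ∀ y : X, Prod.mk y ⁻¹' (Prod.snd ⁻¹' E) = E := fun y => rfl
  simp only [h1, Kernel.prod_apply]
  have hmeas' : Measurable fun z : X × X => t.condKernel z.2 (Prod.mk z.1 ⁻¹' E) :=
    measurable_condKernel_snd_aux _ hE
  have hmeas : Measurable fun z : X × X => t.condKernel z.1 (Prod.mk z.2 ⁻¹' E) :=
    hmeas'.comp measurable_swap
  calc ∫⁻ y, (((s.map Prod.swap).condKernel y).prod (t.condKernel y)) E ∂s.snd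
      = ∫⁻ y, ∫⁻ x, t.condKernel y (Prod.mk x ⁻¹' E)
          ∂((s.map Prod.swap).condKernel y) ∂s.snd := by
        refine lintegral_congr fun y => ?_
        rw [Measure.prod_apply hE]
    _ = ∫⁻ z : X × X, t.condKernel z.1 (Prod.mk z.2 ⁻¹' E) ∂(s.map Prod.swap) := by
        conv_rhs => rw [← (s.map Prod.swap).disintegrate (s.map Prod.swap).condKernel]
        rw [Measure.lintegral_compProd hmeas, Measure.fst_map_swap]
    _ = ∫⁻ z : X × X, t.condKernel z.2 (Prod.mk z.1 ⁻¹' E) ∂s := by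
        rw [lintegral_map (hmeas) measurable_swap]
        simp only [Prod.fst_swap, Prod.snd_swap]
    _ = ∫⁻ x, ∫⁻ y, t.condKernel y (Prod.mk x ⁻¹' E) ∂(s.condKernel x) ∂s.fst := by
        conv_lhs => rw [← s.disintegrate s.condKernel]
        rw [Measure.lintegral_compProd hmeas']
    _ = ∫⁻ x, (t.condKernel ∘ₖ s.condKernel) x (Prod.mk x ⁻¹' E) ∂s.fst := by
        refine lintegral_congr fun x => ?_
        rw [Kernel.comp_apply' _ _ _ (measurable_prodMk_left hE)]

/-- Chapman–Kolmogorov: for `p`-almost every `x`, the conditional kernel of the composite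
coupling `t ∘ s` is the composition of the conditionals of `s` and `t`:
`(t∘s)⃗(C|x) = ∫ t⃗(C|y) s⃗(dy|x)`. -/
theorem condKernel_coupComp (p q r : Measure X)
    [IsProbabilityMeasure p] [IsProbabilityMeasure q] [IsProbabilityMeasure r]
    (s t : Measure (X × X)) [IsProbabilityMeasure s] [IsProbabilityMeasure t]
    (hs1 : s.fst = p) (hs2 : s.snd = q) (ht1 : t.fst = q) (ht2 : t.snd = r) :
    ∀ᵐ x ∂p, ∀ C : Set X, MeasurableSet C →
      (coupComp t s).condKernel x C = ∫⁻ y, t.condKernel y C ∂(s.condKernel x) := by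
  have hfst : (coupComp t s).fst = p := by
    rw [coupComp_eq_compProd, Measure.fst_compProd, hs1]
  have heq : coupComp t s = (coupComp t s).fst ⊗ₘ (t.condKernel ∘ₖ s.condKernel) := by
    rw [hfst, ← hs1, coupComp_eq_compProd]
  have h := eq_condKernel_of_measure_eq_compProd _ heq
  rw [hfst] at h
  filter_upwards [h] with x hx C hC
  rw [← hx, Kernel.comp_apply' _ _ _ hC]
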